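/- arXiv:1603.06827 — 4 statements merged into one kernel-verified Lean document; each statement's English description precedes it below -/
import Mathlib

section
/- Assume there is a constant C > 0 such that for every finite set B ⊂ ℝ with |B| ≥ 2, the number of 8-tuples (b₁,…,b₈) ∈ B⁸ with (b₁+b₂)² - (b₃+b₄)² = (b₅+b₆)² - (b₇+b₈)² is at most C|B|⁶ log|B|. Then for all finite A, B ⊂ ℝ with |B| ≥ 2, E⁺(A) · |A + (B+B)²|² ≥ |A|⁴|B|² / (C log|B|). -/
open Finset Pointwise

/-- The additive energy of `A`: quadruples with `a₁ - a₂ = a₃ - a₄`. -/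
noncomputable def addE (A : Finset ℝ) : ℕ :=
  (((A ×ˢ A) ×ˢ (A ×ˢ A)).filter (fun x => x.1.1 - x.1.2 = x.2.1 - x.2.2)).card

/-- Number of 8-tuples in `B⁸` with `(b₁+b₂)² - (b₃+b₄)² = (b₅+b₆)² - (b₇+b₈)²`. -/
noncomputable def quadEnergy (B : Finset ℝ) : ℕ :=
  ((((B ×ˢ B) ×ˢ (B ×ˢ B)) ×ˢ ((B ×ˢ B) ×ˢ (B ×ˢ B))).filter
    (fun x => (x.1.1.1 + x.1.1.2) ^ 2 - (x.1.2.1 + x.1.2.2) ^ 2 =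
      (x.2.1.1 + x.2.1.2) ^ 2 - (x.2.2.1 + x.2.2.2) ^ 2)).card

/-- The set `A + (B+B)² = {a + (b₁+b₂)² : a ∈ A, b₁, b₂ ∈ B}`. -/
noncomputable def shiftSet (A B : Finset ℝ) : Finset ℝ :=
  (A ×ˢ B ×ˢ B).image (fun x => x.1 + (x.2.1 + x.2.2) ^ 2)

open Classical in
/-- Fiber counting: collisions between `g` on `s` and `h` on `t`. -/
lemma fiber_count {α β γ : Type*} (s : Finset α) (t : Finset β) (g : α → γ) (h : β → γ)
    (u : Finset γ) (hu : s.image g ⊆ u) :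
    ((s ×ˢ t).filter (fun p => g p.1 = h p.2)).card
      = ∑ x ∈ u, (s.filter (fun a => g a = x)).card * (t.filter (fun b => h b = x)).card := by
  rw [Finset.card_eq_sum_card_fiberwise (f := fun p => g p.1) (t := u)
    (by intro p hp
        simp only [Finset.mem_coe, mem_filter, mem_product] at hp
        exact hu (Finset.mem_image_of_mem g hp.1.1))]
  refine Finset.sum_congr rfl fun x _ => ?_
  rw [← Finset.card_product]
  congr 1
  ext p
  simp only [mem_filter, mem_product]
  constructor
  · rintro ⟨⟨⟨h1, h2⟩, h3⟩, h4⟩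
    exact ⟨⟨h1, h4⟩, h2, h4 ▸ h3.symm⟩
  · rintro ⟨⟨h1, h4⟩, h2, h3⟩
    exact ⟨⟨⟨h1, h2⟩, h4.trans h3.symm⟩, h4⟩

set_option maxHeartbeats 1000000 in
theorem stmt2 (C : ℝ) (hC : 0 < C)
    (hGK : ∀ B : Finset ℝ, 2 ≤ B.card →
      (quadEnergy B : ℝ) ≤ C * (B.card : ℝ) ^ 6 * Real.logb 2 B.card) :
    ∀ A B : Finset ℝ, 2 ≤ B.card →
      (addE A : ℝ) * ((shiftSet A B).card : ℝ) ^ 2 ≥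
        (A.card : ℝ) ^ 4 * (B.card : ℝ) ^ 2 / (C * Real.logb 2 B.card) := by
  intro A B hB
  classical
  set φ : ℝ × (ℝ × ℝ) → ℝ := fun t => t.1 + (t.2.1 + t.2.2) ^ 2 with hφ
  set sq2 : (ℝ × ℝ) × (ℝ × ℝ) → ℝ := fun q => (q.1.1 + q.1.2) ^ 2 - (q.2.1 + q.2.2) ^ 2 with hsq2
  set dif : ℝ × ℝ → ℝ := fun p => p.1 - p.2 with hdif
  set s := A ×ˢ B ×ˢ B with hs
  set P := (B ×ˢ B) ×ˢ (B ×ˢ B) with hP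
  set S := shiftSet A B with hS
  have hSim : S = s.image φ := rfl
  -- T : the collision count
  set T : ℕ := ((s ×ˢ s).filter (fun p => φ p.1 = φ p.2)).card with hT
  -- Step 1: (|A||B|²)² ≤ |S| * T
  have step1 : ((A.card * B.card ^ 2 : ℕ) : ℕ) ^ 2 ≤ S.card * T := by
    have hsum : ∑ x ∈ S, (s.filter (fun a => φ a = x)).card = s.card := by
      rw [hSim]
      exact (Finset.card_eq_sum_card_fiberwise (fun a ha => Finset.mem_image_of_mem φ ha)).symm
    have hT2 : T = ∑ x ∈ S, (s.filter (fun a => φ a = x)).card ^ 2 := by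
      rw [hT, fiber_count s s φ φ S (le_of_eq hSim.symm)]
      simp [sq]
    have hcard : s.card = A.card * B.card ^ 2 := by
      simp [hs, Finset.card_product, sq, mul_assoc]
    calc (A.card * B.card ^ 2) ^ 2 = (∑ x ∈ S, (s.filter (fun a => φ a = x)).card) ^ 2 := by
          rw [hsum, hcard]
      _ ≤ S.card * ∑ x ∈ S, (s.filter (fun a => φ a = x)).card ^ 2 :=
          sq_sum_le_card_mul_sum_sq
      _ = S.card * T := by rw [hT2]
  -- the common difference index set
  set u := ((A ×ˢ A).image dif) ∪ P.image sq2 with hu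
  set rA : ℝ → ℕ := fun d => ((A ×ˢ A).filter (fun p => dif p = d)).card with hrA
  set rQ : ℝ → ℕ := fun d => (P.filter (fun q => sq2 q = d)).card with hrQ
  -- Step 2: T = ∑ rA * rQ
  have step2 : T = ∑ d ∈ u, rA d * rQ d := by
    rw [← fiber_count (A ×ˢ A) P dif sq2 u Finset.subset_union_left]
    rw [hT]
    refine Finset.card_bij' (fun x _ => ((x.1.1, x.2.1), ((x.2.2, x.1.2))))
      (fun y _ => ((y.1.1, y.2.2), (y.1.2, y.2.1))) ?_ ?_ ?_ ?_
    · intro x hx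
      simp only [hs, hP, hφ, hdif, hsq2, mem_filter, mem_product] at hx ⊢
      obtain ⟨h1, h2⟩ := hx
      exact ⟨by tauto, by linarith⟩
    · intro y hy
      simp only [hs, hP, hφ, hdif, hsq2, mem_filter, mem_product] at hy ⊢
      obtain ⟨h1, h2⟩ := hy
      exact ⟨by tauto, by linarith⟩
    · intro x hx; rfl
    · intro y hy; rfl
  -- Step 3: addE and quadEnergy as sums of squares
  have hAE : addE A = ∑ d ∈ u, rA d ^ 2 := by
    have := fiber_count (A ×ˢ A) (A ×ˢ A) dif dif u Finset.subset_union_left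
    rw [addE, this]
    simp [sq]
    rfl
  have hQE : quadEnergy B = ∑ d ∈ u, rQ d ^ 2 := by
    have := fiber_count P P sq2 sq2 u Finset.subset_union_right
    rw [quadEnergy, this]
    simp [sq]
    rfl
  -- Step 4: T² ≤ addE * quadEnergy
  have step4 : (T : ℕ) ^ 2 ≤ addE A * quadEnergy B := by
    rw [step2, hAE, hQE]
    exact Finset.sum_mul_sq_le_sq_mul_sq u rA rQ
  -- now real arithmetic
  have hL : (1 : ℝ) ≤ Real.logb 2 B.card := by
    rw [Real.le_logb_iff_rpow_le one_lt_two (by positivity)]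
    · norm_num
      exact_mod_cast hB
  have hLpos : 0 < Real.logb 2 B.card := lt_of_lt_of_le one_pos hL
  have hBpos : (0 : ℝ) < (B.card : ℝ) := by positivity
  have hQ := hGK B hB
  -- combine in ℝ
  have c1 : ((A.card : ℝ) * (B.card : ℝ) ^ 2) ^ 2 ≤ (S.card : ℝ) * T := by
    exact_mod_cast step1
  have c2 : (T : ℝ) ^ 2 ≤ (addE A : ℝ) * quadEnergy B := by exact_mod_cast step4
  have key : ((A.card : ℝ) * (B.card : ℝ) ^ 2) ^ 4
      ≤ (addE A : ℝ) * (S.card : ℝ) ^ 2 * (C * (B.card : ℝ) ^ 6 * Real.logb 2 B.card) := by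
    have h1 : (((A.card : ℝ) * (B.card : ℝ) ^ 2) ^ 2) ^ 2 ≤ ((S.card : ℝ) * T) ^ 2 :=
      pow_le_pow_left₀ (by positivity) c1 2
    calc ((A.card : ℝ) * (B.card : ℝ) ^ 2) ^ 4
        = (((A.card : ℝ) * (B.card : ℝ) ^ 2) ^ 2) ^ 2 := by ring
      _ ≤ ((S.card : ℝ) * T) ^ 2 := h1
      _ = (S.card : ℝ) ^ 2 * (T : ℝ) ^ 2 := by ring
      _ ≤ (S.card : ℝ) ^ 2 * ((addE A : ℝ) * quadEnergy B) := by
          exact mul_le_mul_of_nonneg_left c2 (by positivity)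
      _ ≤ (S.card : ℝ) ^ 2 * ((addE A : ℝ) * (C * (B.card : ℝ) ^ 6 * Real.logb 2 B.card)) := by
          refine mul_le_mul_of_nonneg_left ?_ (by positivity)
          exact mul_le_mul_of_nonneg_left hQ (by positivity)
      _ = (addE A : ℝ) * (S.card : ℝ) ^ 2 * (C * (B.card : ℝ) ^ 6 * Real.logb 2 B.card) := by
          ring
  rw [ge_iff_le, div_le_iff₀ (by positivity)]
  have hB6 : (0:ℝ) < (B.card : ℝ) ^ 6 := by positivity
  rw [← mul_le_mul_iff_of_pos_right hB6]
  calc (A.card : ℝ) ^ 4 * (B.card : ℝ) ^ 2 * (B.card : ℝ) ^ 6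
      = ((A.card : ℝ) * (B.card : ℝ) ^ 2) ^ 4 := by ring
    _ ≤ (addE A : ℝ) * (S.card : ℝ) ^ 2 * (C * (B.card : ℝ) ^ 6 * Real.logb 2 B.card) := key
    _ = (addE A : ℝ) * (S.card : ℝ) ^ 2 * (C * Real.logb 2 B.card) * (B.card : ℝ) ^ 6 := by ring
end

section
/- Assume (i) there is C₁ > 0 such that for every finite B ⊂ ℝ with |B| ≥ 2, E⁺(A)·|A + (B+B)²|² ≥ |A|⁴|B|²/(C₁ log|B|) for all finite A ⊂ ℝ, and (ii) there is C₂ > 0 such that E*(A) ≤ C₂|A+A|² log|A| for every finite A ⊂ ℝ with |A| ≥ 2 (Solymosi's bound). Then there is c > 0 such that for every finite set A of positive reals with |A| ≥ 2, |{(a₁+a₂+a₃+a₄)² + log a₅ : aᵢ ∈ A}| ≥ c|A|²/log|A|. -/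
set_option maxHeartbeats 1000000


open Finset Pointwise

/-- The multiplicative energy of `A`: quadruples with `a₁/a₂ = a₃/a₄`, i.e. `a₁a₄ = a₂a₃`. -/
noncomputable def mulE (A : Finset ℝ) : ℕ :=
  (((A ×ˢ A) ×ˢ (A ×ˢ A)).filter (fun x => x.1.1 * x.2.2 = x.1.2 * x.2.1)).card

/-- The expander set `{(a₁+a₂+a₃+a₄)² + log a₅ : aᵢ ∈ A}` (log base 2). -/
noncomputable def expanderSet (A : Finset ℝ) : Finset ℝ :=
  ((A ×ˢ A) ×ˢ (A ×ˢ A) ×ˢ A).image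
    (fun x => (x.1.1 + x.1.2 + x.2.1.1 + x.2.1.2) ^ 2 + Real.logb 2 x.2.2)

theorem stmt4
    (h1 : ∃ C₁ > (0:ℝ), ∀ B : Finset ℝ, 2 ≤ B.card → ∀ A : Finset ℝ,
      (addE A : ℝ) * ((shiftSet A B).card : ℝ) ^ 2 ≥
        (A.card : ℝ) ^ 4 * (B.card : ℝ) ^ 2 / (C₁ * Real.logb 2 B.card))
    (h2 : ∃ C₂ > (0:ℝ), ∀ A : Finset ℝ, 2 ≤ A.card →
      (mulE A : ℝ) ≤ C₂ * ((A + A).card : ℝ) ^ 2 * Real.logb 2 A.card) :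
    ∃ c > (0:ℝ), ∀ A : Finset ℝ, (∀ a ∈ A, (0:ℝ) < a) → 2 ≤ A.card →
      ((expanderSet A).card : ℝ) ≥ c * (A.card : ℝ) ^ 2 / Real.logb 2 A.card := by
  obtain ⟨C₁, hC₁, H1⟩ := h1
  obtain ⟨C₂, hC₂, H2⟩ := h2
  refine ⟨(Real.sqrt (2 * C₁ * C₂))⁻¹, by positivity, ?_⟩
  intro A hApos hA2
  have h2pos : (0:ℝ) < 2 := by norm_num
  have h2ne : (2:ℝ) ≠ 1 := by norm_num
  set L : Finset ℝ := A.image (Real.logb 2) with hLdef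
  -- |L| = |A|
  have hLcard : L.card = A.card := by
    apply Finset.card_image_of_injOn
    intro x hx y hy hxy
    have hx0 := hApos x hx
    have hy0 := hApos y hy
    have := congrArg (fun t => (2:ℝ) ^ t) hxy
    simpa [Real.rpow_logb h2pos h2ne hx0, Real.rpow_logb h2pos h2ne hy0] using this
  -- addE L = mulE A
  have hE : addE L = mulE A := by
    unfold addE mulE
    refine Finset.card_bij'
      (fun x _ => (((2:ℝ) ^ x.1.1, (2:ℝ) ^ x.1.2), ((2:ℝ) ^ x.2.1, (2:ℝ) ^ x.2.2)))
      (fun x _ => ((Real.logb 2 x.1.1, Real.logb 2 x.1.2),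
        (Real.logb 2 x.2.1, Real.logb 2 x.2.2))) ?_ ?_ ?_ ?_
    · rintro ⟨⟨a, b⟩, c, d⟩ hx
      simp only [Finset.mem_filter, Finset.mem_product] at hx ⊢
      obtain ⟨⟨⟨ha, hb⟩, hc, hd⟩, hcond⟩ := hx
      simp only [hLdef, Finset.mem_image] at ha hb hc hd
      obtain ⟨a', ha', rfl⟩ := ha
      obtain ⟨b', hb', rfl⟩ := hb
      obtain ⟨c', hc', rfl⟩ := hc
      obtain ⟨d', hd', rfl⟩ := hd
      rw [Real.rpow_logb h2pos h2ne (hApos _ ha'), Real.rpow_logb h2pos h2ne (hApos _ hb'),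
        Real.rpow_logb h2pos h2ne (hApos _ hc'), Real.rpow_logb h2pos h2ne (hApos _ hd')]
      refine ⟨⟨⟨ha', hb'⟩, hc', hd'⟩, ?_⟩
      have h1' : Real.logb 2 a' + Real.logb 2 d' = Real.logb 2 b' + Real.logb 2 c' := by
        linarith [hcond]
      have h2' : Real.logb 2 (a' * d') = Real.logb 2 (b' * c') := by
        rw [Real.logb_mul (hApos _ ha').ne' (hApos _ hd').ne',
          Real.logb_mul (hApos _ hb').ne' (hApos _ hc').ne']
        exact h1'
      have := congrArg (fun t => (2:ℝ) ^ t) h2'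
      simpa [Real.rpow_logb h2pos h2ne (mul_pos (hApos _ ha') (hApos _ hd')),
        Real.rpow_logb h2pos h2ne (mul_pos (hApos _ hb') (hApos _ hc'))] using this
    · rintro ⟨⟨a, b⟩, c, d⟩ hx
      simp only [Finset.mem_filter, Finset.mem_product] at hx ⊢
      obtain ⟨⟨⟨ha, hb⟩, hc, hd⟩, hcond⟩ := hx
      refine ⟨⟨⟨Finset.mem_image_of_mem _ ha, Finset.mem_image_of_mem _ hb⟩,
        Finset.mem_image_of_mem _ hc, Finset.mem_image_of_mem _ hd⟩, ?_⟩
      have h2' : Real.logb 2 (a * d) = Real.logb 2 (b * c) := by rw [hcond]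
      rw [Real.logb_mul (hApos _ ha).ne' (hApos _ hd).ne',
        Real.logb_mul (hApos _ hb).ne' (hApos _ hc).ne'] at h2'
      linarith
    · rintro ⟨⟨a, b⟩, c, d⟩ hx
      simp only [Finset.mem_filter, Finset.mem_product] at hx
      obtain ⟨⟨⟨ha, hb⟩, hc, hd⟩, -⟩ := hx
      simp [Real.logb_rpow h2pos h2ne]
    · rintro ⟨⟨a, b⟩, c, d⟩ hx
      simp only [Finset.mem_filter, Finset.mem_product] at hx
      obtain ⟨⟨⟨ha, hb⟩, hc, hd⟩, -⟩ := hx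
      simp [Real.rpow_logb h2pos h2ne (hApos _ ha), Real.rpow_logb h2pos h2ne (hApos _ hb),
        Real.rpow_logb h2pos h2ne (hApos _ hc), Real.rpow_logb h2pos h2ne (hApos _ hd)]
  -- shiftSet L (A+A) ⊆ expanderSet A
  have hsub : shiftSet L (A + A) ⊆ expanderSet A := by
    intro x hx
    simp only [shiftSet, Finset.mem_image, Finset.mem_product] at hx
    obtain ⟨⟨l, s, t⟩, ⟨hl, hs, ht⟩, rfl⟩ := hx
    simp only [hLdef, Finset.mem_image] at hl
    obtain ⟨a5, ha5, rfl⟩ := hl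
    obtain ⟨a1, ha1, a2, ha2, rfl⟩ := Finset.mem_add.mp hs
    obtain ⟨a3, ha3, a4, ha4, rfl⟩ := Finset.mem_add.mp ht
    refine Finset.mem_image.mpr ⟨((a1, a2), (a3, a4), a5), ?_, by ring⟩
    simp [Finset.mem_product, ha1, ha2, ha3, ha4, ha5]
  -- notation
  set n : ℝ := (A.card : ℝ) with hn
  set K : ℝ := ((A + A).card : ℝ) with hK
  set S : ℝ := ((expanderSet A).card : ℝ) with hS
  set l : ℝ := Real.logb 2 n with hl
  set lK : ℝ := Real.logb 2 K with hlK
  have hn2 : (2:ℝ) ≤ n := by rw [hn]; exact_mod_cast hA2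
  have hAne : A.Nonempty := Finset.card_pos.mp (by omega)
  have hKA : A.card ≤ (A + A).card := Finset.card_le_card_add_left hAne
  have hK2' : 2 ≤ (A + A).card := le_trans hA2 hKA
  have hK2 : (2:ℝ) ≤ K := by rw [hK]; exact_mod_cast hK2'
  have hKpos : (0:ℝ) < K := by linarith
  have hnpos : (0:ℝ) < n := by linarith
  have hKn : K ≤ n ^ 2 := by
    have := Finset.card_add_le (s := A) (t := A)
    have : ((A + A).card : ℝ) ≤ (A.card : ℝ) * (A.card : ℝ) := by exact_mod_cast this
    rw [hK, hn]; nlinarith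
  have h12 : (1:ℝ) < 2 := one_lt_two
  have hl1 : (1:ℝ) ≤ l := by
    rw [hl, ← Real.logb_self_eq_one h12]
    exact Real.logb_le_logb_of_le h12 h2pos hn2
  have hlK1 : (1:ℝ) ≤ lK := by
    rw [hlK, ← Real.logb_self_eq_one h12]
    exact Real.logb_le_logb_of_le h12 h2pos hK2
  have hlpos : (0:ℝ) < l := by linarith
  have hlK2l : lK ≤ 2 * l := by
    have h1' : lK ≤ Real.logb 2 (n ^ 2) := Real.logb_le_logb_of_le h12 hKpos hKn
    have h2' : Real.logb 2 (n ^ 2) = 2 * l := by rw [Real.logb_pow]; norm_num; exact hl.symm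
    linarith
  -- apply hypotheses
  have key := H1 (A + A) hK2' L
  rw [hLcard, hE] at key
  have hmul := H2 A hA2
  have hscS : ((shiftSet L (A + A)).card : ℝ) ≤ S := by
    rw [hS]; exact_mod_cast Finset.card_le_card hsub
  have hscnn : (0:ℝ) ≤ ((shiftSet L (A + A)).card : ℝ) := by positivity
  have hSnn : (0:ℝ) ≤ S := by positivity
  have hsc2 : ((shiftSet L (A + A)).card : ℝ) ^ 2 ≤ S ^ 2 := pow_le_pow_left₀ hscnn hscS 2
  have hmulnn : (0:ℝ) ≤ (mulE A : ℝ) := by positivity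
  have hchain : n ^ 4 * K ^ 2 / (C₁ * lK) ≤ (C₂ * K ^ 2 * l) * S ^ 2 := by
    calc n ^ 4 * K ^ 2 / (C₁ * lK) ≤ (mulE A : ℝ) * ((shiftSet L (A + A)).card : ℝ) ^ 2 := key
      _ ≤ (C₂ * K ^ 2 * l) * S ^ 2 := by
          apply mul_le_mul hmul hsc2 (by positivity) (by positivity)
  have hC₁lK : (0:ℝ) < C₁ * lK := by positivity
  have h5 : n ^ 4 * K ^ 2 ≤ (C₂ * K ^ 2 * l) * S ^ 2 * (C₁ * lK) :=
    (div_le_iff₀ hC₁lK).mp hchain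
  have h6 : n ^ 4 * K ^ 2 ≤ (2 * C₁ * C₂ * l ^ 2 * S ^ 2) * K ^ 2 := by
    nlinarith [mul_le_mul_of_nonneg_left hlK2l
      (by positivity : (0:ℝ) ≤ C₂ * K ^ 2 * l * S ^ 2 * C₁)]
  have h7 : n ^ 4 ≤ 2 * C₁ * C₂ * l ^ 2 * S ^ 2 :=
    le_of_mul_le_mul_right h6 (by positivity)
  set c : ℝ := (Real.sqrt (2 * C₁ * C₂))⁻¹ with hc
  have hcpos : 0 < c := by positivity
  have hc2 : c ^ 2 = (2 * C₁ * C₂)⁻¹ := by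
    rw [hc, inv_pow, Real.sq_sqrt (by positivity)]
  have hgoal2 : (c * n ^ 2 / l) ^ 2 ≤ S ^ 2 := by
    have heq : (c * n ^ 2 / l) ^ 2 = n ^ 4 / (2 * C₁ * C₂ * l ^ 2) := by
      rw [div_pow, mul_pow, hc2]
      field_simp
    rw [heq, div_le_iff₀ (by positivity)]
    linarith [h7]
  have : c * n ^ 2 / l ≤ S :=
    (pow_le_pow_iff_left₀ (by positivity) hSnn (by norm_num)).mp hgoal2
  exact this
end

section
/- Assume (i) Lemma 2.4: E*(A)|A(B+C)|² ≥ c₁|A|⁴|B||C|/log|A| for all finite A,B,C ⊂ ℝ with |A| ≥ 2, and (ii) Lemma 4.4 (difference part): if E*(A) ≥ |A|³/K with K ≥ 1 then |A-A| ≥ c₂|A|^{8/5}/(K^{6/5}(log|A|)^{C}). Then there are constants c, C' > 0 such that for every finite set A of nonzero reals with |A| ≥ 2, |A(A-A)| ≥ c|A|^{3/2 + 1/34}/(log|A|)^{C'}. -/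
open Finset Pointwise

/-- The multiplicative energy written as `Σ_x |A ∩ xA|²`. -/
noncomputable def mulER (A : Finset ℝ) : ℝ :=
  ∑ x ∈ A / A, ((A ∩ A.image (fun a => x * a)).card : ℝ) ^ 2

/-- The set `A(B+C) = {a(b+c) : a ∈ A, b ∈ B, c ∈ C}`. -/
noncomputable def prodSumSet (A B C : Finset ℝ) : Finset ℝ :=
  (A ×ˢ B ×ˢ C).image (fun x => x.1 * (x.2.1 + x.2.2))

/-- The set `A(A-A) = {a(b-c) : a, b, c ∈ A}`. -/
noncomputable def prodDiffSet (A : Finset ℝ) : Finset ℝ :=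
  (A ×ˢ A ×ˢ A).image (fun x => x.1 * (x.2.1 - x.2.2))

lemma fiberCard (A : Finset ℝ) (hA : (0:ℝ) ∉ A) {x : ℝ} (hx : x ∈ A / A) :
    ((A ×ˢ A).filter (fun p => p.1 / p.2 = x)).card
      = (A ∩ A.image (fun a => x * a)).card := by
  obtain ⟨a, ha, b, hb, hab⟩ := Finset.mem_div.mp hx
  have hb0 : b ≠ 0 := fun h => hA (h ▸ hb)
  have ha0 : a ≠ 0 := fun h => hA (h ▸ ha)
  have hx0 : x ≠ 0 := by rw [← hab]; exact div_ne_zero ha0 hb0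
  apply Finset.card_bij' (fun p _ => p.1) (fun a _ => (a, a / x))
  · intro p hp
    simp only [Finset.mem_filter, Finset.mem_product] at hp
    obtain ⟨⟨h1, h2⟩, h3⟩ := hp
    have h20 : p.2 ≠ 0 := fun h => hA (h ▸ h2)
    refine Finset.mem_inter.mpr ⟨h1, Finset.mem_image.mpr ⟨p.2, h2, ?_⟩⟩
    rw [← h3]; field_simp
  · intro c hc
    simp only [Finset.mem_inter, Finset.mem_image] at hc
    obtain ⟨hcA, d, hd, hdc⟩ := hc
    simp only [Finset.mem_filter, Finset.mem_product]
    have : c / x = d := by rw [← hdc]; field_simp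
    refine ⟨⟨hcA, this ▸ hd⟩, ?_⟩
    have hd0 : d ≠ 0 := fun h => hA (h ▸ hd)
    rw [← hdc]
    field_simp
  · intro p hp
    simp only [Finset.mem_filter, Finset.mem_product] at hp
    obtain ⟨⟨h1, h2⟩, h3⟩ := hp
    have h20 : p.2 ≠ 0 := fun h => hA (h ▸ h2)
    have h10 : p.1 ≠ 0 := fun h => hA (h ▸ h1)
    have : p.1 / x = p.2 := by rw [← h3]; field_simp
    exact Prod.ext rfl this
  · intro c hc; rfl

lemma sumFibers (A : Finset ℝ) (hA : (0:ℝ) ∉ A) :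
    ∑ x ∈ A / A, ((A ∩ A.image (fun a => x * a)).card : ℝ) = (A.card : ℝ) ^ 2 := by
  have key : ((A ×ˢ A).card) = ∑ x ∈ A / A, (A ∩ A.image (fun a => x * a)).card := by
    rw [Finset.card_eq_sum_card_fiberwise
      (f := fun p : ℝ × ℝ => p.1 / p.2) (t := A / A) ?_]
    · exact Finset.sum_congr rfl fun x hx => fiberCard A hA hx
    · intro p hp
      simp only [Finset.coe_product, Finset.mem_coe, Finset.mem_product, Set.mem_prod] at hp
      exact Finset.div_mem_div hp.1 hp.2
  have := congrArg (fun n : ℕ => (n : ℝ)) key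
  simpa [Finset.card_product, sq] using this.symm

lemma mulER_le (A : Finset ℝ) (hA : (0:ℝ) ∉ A) : mulER A ≤ (A.card : ℝ) ^ 3 := by
  have h1 : mulER A ≤ ∑ x ∈ A / A, (A.card : ℝ) * ((A ∩ A.image (fun a => x * a)).card : ℝ) := by
    refine Finset.sum_le_sum fun x hx => ?_
    have hle : ((A ∩ A.image (fun a => x * a)).card : ℝ) ≤ (A.card : ℝ) := by
      exact_mod_cast Finset.card_le_card (Finset.inter_subset_left)
    have hnn : (0:ℝ) ≤ ((A ∩ A.image (fun a => x * a)).card : ℝ) := by positivity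
    nlinarith
  calc mulER A ≤ _ := h1
    _ = (A.card : ℝ) * ∑ x ∈ A / A, ((A ∩ A.image (fun a => x * a)).card : ℝ) :=
        (Finset.mul_sum _ _ _).symm
    _ = (A.card : ℝ) * (A.card : ℝ) ^ 2 := by rw [sumFibers A hA]
    _ = (A.card : ℝ) ^ 3 := by ring

lemma mulER_ge (A : Finset ℝ) (hA : (0:ℝ) ∉ A) (hne : A.Nonempty) :
    (A.card : ℝ) ^ 2 ≤ mulER A := by
  obtain ⟨a, ha⟩ := hne
  have ha0 : a ≠ 0 := fun h => hA (h ▸ ha)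
  have h1 : (1:ℝ) ∈ A / A := Finset.mem_div.mpr ⟨a, ha, a, ha, div_self ha0⟩
  have hid : A ∩ A.image (fun b => (1:ℝ) * b) = A := by simp
  have hs := Finset.single_le_sum
    (f := fun x : ℝ => ((A ∩ A.image (fun b => x * b)).card : ℝ) ^ 2)
    (fun x _ => by positivity) h1
  simpa [hid, mulER] using hs

lemma prodSum_neg_eq (A : Finset ℝ) : prodSumSet A A (-A) = prodDiffSet A := by
  ext z
  simp only [prodSumSet, prodDiffSet, Finset.mem_image, Finset.mem_product, Finset.mem_neg]
  constructor
  · rintro ⟨⟨a, b, c⟩, ⟨ha, hb, d, hd, rfl⟩, rfl⟩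
    exact ⟨(a, b, d), ⟨ha, hb, hd⟩, by ring⟩
  · rintro ⟨⟨a, b, c⟩, ⟨ha, hb, hc⟩, rfl⟩
    exact ⟨(a, b, -c), ⟨ha, hb, c, hc, rfl⟩, by ring⟩

lemma sub_card_le (A : Finset ℝ) (hA : (0:ℝ) ∉ A) (hne : A.Nonempty) :
    (A - A).card ≤ (prodDiffSet A).card := by
  obtain ⟨a, ha⟩ := hne
  have ha0 : a ≠ 0 := fun h => hA (h ▸ ha)
  apply Finset.card_le_card_of_injOn (fun d => a * d)
  · intro d hd
    obtain ⟨b, hb, c, hc, rfl⟩ := Finset.mem_sub.mp hd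
    exact Finset.mem_image.mpr ⟨(a, b, c), Finset.mem_product.mpr
      ⟨ha, Finset.mem_product.mpr ⟨hb, hc⟩⟩, rfl⟩
  · intro d₁ _ d₂ _ h
    exact mul_left_cancel₀ ha0 h

theorem stmt17 (c₁ c₂ C : ℝ) (hc₁ : 0 < c₁) (hc₂ : 0 < c₂) (hC : 0 < C)
    (h1 : ∀ A B C' : Finset ℝ, 2 ≤ A.card →
      mulER A * ((prodSumSet A B C').card : ℝ) ^ 2 ≥
        c₁ * (A.card : ℝ) ^ 4 * (B.card : ℝ) * (C'.card : ℝ) / Real.logb 2 A.card)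
    (h2 : ∀ A : Finset ℝ, ∀ K : ℝ, (0:ℝ) ∉ A → 2 ≤ A.card → 1 ≤ K →
      mulER A ≥ (A.card : ℝ) ^ 3 / K →
      ((A - A).card : ℝ) ≥
        c₂ * (A.card : ℝ) ^ ((8:ℝ)/5) / (K ^ ((6:ℝ)/5) * (Real.logb 2 A.card) ^ C)) :
    ∃ c > (0:ℝ), ∃ C' > (0:ℝ), ∀ A : Finset ℝ, (0:ℝ) ∉ A → 2 ≤ A.card →
      ((prodDiffSet A).card : ℝ) ≥
        c * (A.card : ℝ) ^ ((3:ℝ)/2 + 1/34) / (Real.logb 2 A.card) ^ C' := by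
  have hc0 : 0 < min (Real.sqrt c₁) c₂ := lt_min (Real.sqrt_pos.mpr hc₁) hc₂
  refine ⟨min (Real.sqrt c₁) c₂, hc0, max C (1/2),
    lt_max_of_lt_right (by norm_num), ?_⟩
  set c : ℝ := min (Real.sqrt c₁) c₂ with hcdef
  set C' : ℝ := max C (1/2) with hC'def
  intro A hA0 hA2
  set N : ℝ := (A.card : ℝ) with hNdef
  have hN2 : (2:ℝ) ≤ N := by rw [hNdef]; exact_mod_cast hA2
  have hN0 : (0:ℝ) < N := by linarith
  set L : ℝ := Real.logb 2 N with hLdef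
  have hL1 : (1:ℝ) ≤ L := by
    have h := Real.logb_le_logb_of_le (b := 2) (by norm_num) (by norm_num) hN2
    rw [hLdef]
    rwa [Real.logb_self_eq_one (by norm_num)] at h
  have hL0 : (0:ℝ) < L := lt_of_lt_of_le one_pos hL1
  have hne : A.Nonempty := Finset.card_pos.mp (by omega)
  have hE2 : N ^ 2 ≤ mulER A := mulER_ge A hA0 hne
  have hE3 : mulER A ≤ N ^ 3 := mulER_le A hA0
  set E : ℝ := mulER A with hEdef
  have hE0 : (0:ℝ) < E := lt_of_lt_of_le (by positivity) hE2
  set K : ℝ := N ^ 3 / E with hKdef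
  have hK1 : (1:ℝ) ≤ K := (one_le_div hE0).mpr hE3
  have hK0 : (0:ℝ) < K := lt_of_lt_of_le one_pos hK1
  have hEK : E = N ^ 3 / K := by
    rw [hKdef]; field_simp
  set M : ℝ := N ^ ((1:ℝ)/17) with hMdef
  have hM0 : (0:ℝ) < M := Real.rpow_pos_of_pos hN0 _
  set P : ℝ := ((prodDiffSet A).card : ℝ) with hPdef
  have hP0 : (0:ℝ) ≤ P := Nat.cast_nonneg _
  have hLC : L ^ C ≤ L ^ C' := Real.rpow_le_rpow_of_exponent_le hL1 (le_max_left _ _)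
  have hLC'0 : (0:ℝ) < L ^ C' := Real.rpow_pos_of_pos hL0 _
  have hL2C : L ≤ L ^ (2 * C') := by
    calc L = L ^ (1:ℝ) := (Real.rpow_one L).symm
      _ ≤ L ^ (2 * C') := Real.rpow_le_rpow_of_exponent_le hL1
          (by have := le_max_right C (1/2); linarith [hC'def ▸ this])
  have h3N : N ^ ((3:ℝ)) = N ^ (3:ℕ) := by
    rw [show (3:ℝ) = ((3:ℕ):ℝ) by norm_num, Real.rpow_natCast]
  rcases le_or_gt M K with hcase | hcase
  · -- Case 1 : K large, use h1
    have hh := h1 A A (-A) hA2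
    rw [prodSum_neg_eq, Finset.card_neg] at hh
    rw [← hNdef, ← hEdef, ← hPdef, ← hLdef] at hh
    have hh' : c₁ * N ^ 6 ≤ E * P ^ 2 * L := by
      rw [ge_iff_le, div_le_iff₀ hL0] at hh
      calc c₁ * N ^ 6 = c₁ * N ^ 4 * N * N := by ring
        _ ≤ E * P ^ 2 * L := hh
    have hEM : E * M ≤ N ^ 3 := by
      rw [hEK, div_mul_eq_mul_div, div_le_iff₀ hK0]
      exact mul_le_mul_of_nonneg_left hcase (pow_pos hN0 3).le
    have key : c₁ * (N ^ 3 * M) ≤ P ^ 2 * L := by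
      have t1 : c₁ * N ^ 3 * (E * M) ≤ c₁ * N ^ 3 * N ^ 3 :=
        mul_le_mul_of_nonneg_left hEM (mul_pos hc₁ (pow_pos hN0 3)).le
      have step : E * (c₁ * (N ^ 3 * M)) ≤ E * (P ^ 2 * L) := by
        have r1 : E * (c₁ * (N ^ 3 * M)) = c₁ * N ^ 3 * (E * M) := by ring
        have r2 : c₁ * N ^ 3 * N ^ 3 = c₁ * N ^ 6 := by ring
        calc E * (c₁ * (N ^ 3 * M)) = c₁ * N ^ 3 * (E * M) := r1
          _ ≤ c₁ * N ^ 3 * N ^ 3 := t1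
          _ = c₁ * N ^ 6 := r2
          _ ≤ E * P ^ 2 * L := hh'
          _ = E * (P ^ 2 * L) := by ring
      exact le_of_mul_le_mul_left step hE0
    -- now P ≥ c * N^e / L^C'
    have hrhs0 : (0:ℝ) ≤ c * N ^ ((3:ℝ)/2 + 1/34) / L ^ C' :=
      div_nonneg (mul_nonneg hc0.le (Real.rpow_nonneg hN0.le _)) hLC'0.le
    have hsq : (c * N ^ ((3:ℝ)/2 + 1/34) / L ^ C') ^ 2 ≤ P ^ 2 := by
      have e1 : (N ^ ((3:ℝ)/2 + 1/34)) ^ 2 = N ^ 3 * M := by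
        rw [hMdef, ← h3N, ← Real.rpow_add hN0,
          ← Real.rpow_natCast (N ^ ((3:ℝ)/2 + 1/34)) 2, ← Real.rpow_mul hN0.le]
        congr 1
        push_cast
        norm_num
      have e2 : (L ^ C') ^ 2 = L ^ (2 * C') := by
        rw [← Real.rpow_natCast (L ^ C') 2, ← Real.rpow_mul hL0.le, mul_comm]
        norm_num
      have hc2 : c ^ 2 ≤ c₁ := by
        have h1' : c ≤ Real.sqrt c₁ := min_le_left _ _
        nlinarith [Real.sq_sqrt hc₁.le, hc0.le]
      rw [div_pow, mul_pow, e1, e2]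
      calc c ^ 2 * (N ^ 3 * M) / L ^ (2 * C') ≤ c₁ * (N ^ 3 * M) / L := by
            apply div_le_div₀ (mul_pos hc₁ (mul_pos (pow_pos hN0 3) hM0)).le
              (mul_le_mul_of_nonneg_right hc2 (mul_pos (pow_pos hN0 3) hM0).le) hL0 hL2C
        _ ≤ P ^ 2 := by rw [div_le_iff₀ hL0]; exact key
    exact (pow_le_pow_iff_left₀ hrhs0 hP0 two_ne_zero).mp hsq
  · -- Case 2 : K small, use h2
    have hh := h2 A K hA0 hA2 hK1 (by rw [← hNdef, ← hEdef]; exact hEK.ge)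
    rw [← hNdef, ← hLdef] at hh
    have hK65 : K ^ ((6:ℝ)/5) ≤ N ^ ((6:ℝ)/85) := by
      calc K ^ ((6:ℝ)/5) ≤ M ^ ((6:ℝ)/5) :=
            Real.rpow_le_rpow hK0.le hcase.le (by norm_num)
        _ = N ^ ((6:ℝ)/85) := by
            rw [hMdef, ← Real.rpow_mul hN0.le]; norm_num
    have hdenle : K ^ ((6:ℝ)/5) * L ^ C ≤ N ^ ((6:ℝ)/85) * L ^ C' :=
      mul_le_mul hK65 hLC (Real.rpow_pos_of_pos hL0 _).le
        (Real.rpow_pos_of_pos hN0 _).le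
    have hden0 : (0:ℝ) < K ^ ((6:ℝ)/5) * L ^ C :=
      mul_pos (Real.rpow_pos_of_pos hK0 _) (Real.rpow_pos_of_pos hL0 _)
    have hmid : c * N ^ ((3:ℝ)/2 + 1/34) / L ^ C' ≤
        c₂ * N ^ ((8:ℝ)/5) / (K ^ ((6:ℝ)/5) * L ^ C) := by
      calc c * N ^ ((3:ℝ)/2 + 1/34) / L ^ C'
          ≤ c₂ * N ^ ((3:ℝ)/2 + 1/34) / L ^ C' := by
            exact div_le_div_of_nonneg_right (mul_le_mul_of_nonneg_right (min_le_right _ _)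
              (Real.rpow_nonneg hN0.le _)) hLC'0.le
        _ = c₂ * N ^ ((8:ℝ)/5) / (N ^ ((6:ℝ)/85) * L ^ C') := by
            rw [div_mul_eq_div_div, mul_div_assoc, mul_div_assoc,
              ← Real.rpow_sub hN0]
            norm_num
            ring
        _ ≤ c₂ * N ^ ((8:ℝ)/5) / (K ^ ((6:ℝ)/5) * L ^ C) := by
            apply div_le_div_of_nonneg_left (mul_pos hc₂ (Real.rpow_pos_of_pos hN0 _)).le hden0 hdenle
    have hPsub : ((A - A).card : ℝ) ≤ P := by
      rw [hPdef]; exact_mod_cast sub_card_le A hA0 hne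
    linarith [hh, hmid, hPsub]
end

section
/- Assume (i) Lemma 2.4: E*(A)|A(B+C)|² ≥ c₁|A|⁴|B||C|/log|A| for all finite A,B,C ⊂ ℝ with |A| ≥ 2, and (ii) Lemma 4.4 (sum part): if E*(A) ≥ |A|³/K with K ≥ 1 then |A+A| ≥ c₂|A|^{58/37}/(K^{42/37}(log|A|)^{C}). Then there are constants c, C' > 0 such that for every finite set A of nonzero reals with |A| ≥ 2, |A(A+A)| ≥ c|A|^{3/2 + 5/242}/(log|A|)^{C'}. -/
open Finset Pointwise

theorem stmt18 (c₁ c₂ C : ℝ) (hc₁ : 0 < c₁) (hc₂ : 0 < c₂) (hC : 0 < C)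
    (h1 : ∀ A B C' : Finset ℝ, 2 ≤ A.card →
      mulER A * ((prodSumSet A B C').card : ℝ) ^ 2 ≥
        c₁ * (A.card : ℝ) ^ 4 * (B.card : ℝ) * (C'.card : ℝ) / Real.logb 2 A.card)
    (h2 : ∀ A : Finset ℝ, ∀ K : ℝ, (0:ℝ) ∉ A → 2 ≤ A.card → 1 ≤ K →
      mulER A ≥ (A.card : ℝ) ^ 3 / K →
      ((A + A).card : ℝ) ≥
        c₂ * (A.card : ℝ) ^ ((58:ℝ)/37) / (K ^ ((42:ℝ)/37) * (Real.logb 2 A.card) ^ C)) :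
    ∃ c > (0:ℝ), ∃ C' > (0:ℝ), ∀ A : Finset ℝ, (0:ℝ) ∉ A → 2 ≤ A.card →
      ((prodSumSet A A A).card : ℝ) ≥
        c * (A.card : ℝ) ^ ((3:ℝ)/2 + 5/242) / (Real.logb 2 A.card) ^ C' := by
  refine ⟨min (Real.sqrt c₁) c₂, lt_min (Real.sqrt_pos.mpr hc₁) hc₂,
    max C (1/2), lt_max_of_lt_right (by norm_num), ?_⟩
  intro A h0 hA2
  set c : ℝ := min (Real.sqrt c₁) c₂ with hc_def
  set C' : ℝ := max C (1/2) with hC'_def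
  have hc0 : 0 < c := lt_min (Real.sqrt_pos.mpr hc₁) hc₂
  set n : ℝ := (A.card : ℝ) with hn_def
  have hn2 : (2:ℝ) ≤ n := by rw [hn_def]; exact_mod_cast hA2
  have hn0 : (0:ℝ) < n := by linarith
  set L : ℝ := Real.logb 2 n with hL_def
  have hL1 : (1:ℝ) ≤ L := by
    have := Real.logb_le_logb_of_le (b := 2) (one_lt_two) (by norm_num : (0:ℝ) < 2) hn2
    rwa [Real.logb_self_eq_one one_lt_two] at this
  have hL0 : (0:ℝ) < L := by linarith
  set P : ℝ := ((prodSumSet A A A).card : ℝ) with hP_def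
  have hP0 : (0:ℝ) ≤ P := Nat.cast_nonneg _
  set e : ℝ := (3:ℝ)/2 + 5/242 with he_def
  set K₀ : ℝ := n ^ ((5:ℝ)/121) with hK₀_def
  have hK₀1 : (1:ℝ) ≤ K₀ := Real.one_le_rpow (by linarith) (by norm_num)
  have hK₀0 : (0:ℝ) < K₀ := by linarith
  -- mulER A > 0
  obtain ⟨a₀, ha₀⟩ := Finset.card_pos.mp (by omega : 0 < A.card)
  have ha₀0 : a₀ ≠ 0 := fun h => h0 (h ▸ ha₀)
  have hE0 : 0 < mulER A := by
    have h1mem : (1:ℝ) ∈ A / A :=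
      Finset.mem_div.mpr ⟨a₀, ha₀, a₀, ha₀, div_self ha₀0⟩
    have hterm : ((A ∩ A.image (fun a => (1:ℝ) * a)).card : ℝ) ^ 2 = n ^ 2 := by
      simp [one_mul, Finset.image_id', hn_def]
    have hle : ((A ∩ A.image (fun a => (1:ℝ) * a)).card : ℝ) ^ 2 ≤ mulER A :=
      Finset.single_le_sum (f := fun x => ((A ∩ A.image (fun a => x * a)).card : ℝ) ^ 2)
        (fun i _ => sq_nonneg _) h1mem
    rw [hterm] at hle
    nlinarith
  have hLC' : L ^ (1/2 : ℝ) ≤ L ^ C' ∧ L ^ C ≤ L ^ C' := by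
    constructor
    · exact Real.rpow_le_rpow_of_exponent_le hL1 (le_max_right _ _)
    · exact Real.rpow_le_rpow_of_exponent_le hL1 (le_max_left _ _)
  have hLC'0 : (0:ℝ) < L ^ C' := Real.rpow_pos_of_pos hL0 _
  have hLC0 : (0:ℝ) < L ^ C := Real.rpow_pos_of_pos hL0 _
  have hne : (0:ℝ) < n ^ e := Real.rpow_pos_of_pos hn0 _
  rcases le_or_gt (mulER A) (n ^ 3 / K₀) with hE | hE
  · -- small energy case: use h1 with B = C = A
    have key := h1 A A A hA2
    rw [← hn_def, ← hP_def, ← hL_def] at key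
    -- P² ≥ c₁ n³ K₀ / L
    have hP2 : c₁ * n ^ 3 * K₀ / L ≤ P ^ 2 := by
      have h6 : c₁ * n ^ 4 * n * n / L ≤ n ^ 3 / K₀ * P ^ 2 :=
        le_trans key (mul_le_mul_of_nonneg_right hE (sq_nonneg _))
      rw [div_mul_eq_mul_div, le_div_iff₀ hK₀0, div_mul_eq_mul_div,
        div_le_iff₀ hL0] at h6
      rw [div_le_iff₀ hL0]
      nlinarith [pow_pos hn0 3, h6]
    -- n³ K₀ = n^(2e)
    have hsplit : n ^ 3 * K₀ = n ^ (e * 2) := by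
      have : e * 2 = (3:ℝ) + 5/121 := by rw [he_def]; norm_num
      have h3 : n ^ ((3:ℝ)) = n ^ (3:ℕ) := by
        rw [← Real.rpow_natCast n 3]; norm_num
      rw [this, Real.rpow_add hn0, hK₀_def, h3]
    have hgoal2 : (c * n ^ e / L ^ C') ^ 2 ≤ P ^ 2 := by
      have hexp : (c * n ^ e / L ^ C') ^ 2 = c ^ 2 * n ^ (e * 2) / (L ^ C') ^ 2 := by
        rw [div_pow, mul_pow, ← Real.rpow_natCast (n ^ e) 2, ← Real.rpow_mul hn0.le]
        norm_num
      rw [hexp]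
      have hc2 : c ^ 2 ≤ c₁ := by
        have h1' : c ≤ Real.sqrt c₁ := min_le_left _ _
        nlinarith [Real.sq_sqrt hc₁.le, hc0]
      have hL2 : L ≤ (L ^ C') ^ 2 := by
        have : (L ^ (1/2 : ℝ)) ^ 2 ≤ (L ^ C') ^ 2 :=
          pow_le_pow_left₀ (Real.rpow_nonneg hL0.le _) hLC'.1 2
        calc L = (L ^ (1/2 : ℝ)) ^ 2 := by
                rw [← Real.rpow_natCast (L ^ (1/2:ℝ)) 2, ← Real.rpow_mul hL0.le]
                norm_num
          _ ≤ (L ^ C') ^ 2 := this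
      calc c ^ 2 * n ^ (e * 2) / (L ^ C') ^ 2
          ≤ c₁ * n ^ (e * 2) / L := by
            apply div_le_div₀ (by positivity)
              (mul_le_mul_of_nonneg_right hc2 (Real.rpow_nonneg hn0.le _)) hL0 hL2
        _ ≤ P ^ 2 := by rw [← hsplit, ← mul_assoc]; exact hP2
    exact (pow_le_pow_iff_left₀ (by positivity) hP0 (by norm_num)).mp hgoal2
  · -- large energy case: use h2 with K = K₀
    have hE' : mulER A ≥ n ^ 3 / K₀ := le_of_lt hE
    have key := h2 A K₀ h0 hA2 hK₀1 (by rw [← hn_def]; exact hE')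
    rw [← hn_def, ← hL_def] at key
    -- P ≥ |A+A|
    have hPAA : ((A + A).card : ℝ) ≤ P := by
      have hsub : (A + A).image (fun x => a₀ * x) ⊆ prodSumSet A A A := by
        intro y hy
        simp only [Finset.mem_image] at hy
        obtain ⟨x, hx, rfl⟩ := hy
        rw [Finset.mem_add] at hx
        obtain ⟨b, hb, cc, hcc, rfl⟩ := hx
        exact Finset.mem_image.mpr ⟨⟨a₀, b, cc⟩, by
          simp [Finset.mem_product, ha₀, hb, hcc], rfl⟩
      have hcard : ((A + A).image (fun x => a₀ * x)).card = (A + A).card :=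
        Finset.card_image_of_injective _ (mul_right_injective₀ ha₀0)
      have := Finset.card_le_card hsub
      rw [hcard] at this
      rw [hP_def]
      exact_mod_cast this
    -- rewrite the bound
    have hKpow : K₀ ^ ((42:ℝ)/37) = n ^ ((5:ℝ)/121 * (42/37)) := by
      rw [hK₀_def, ← Real.rpow_mul hn0.le]
    have hbound : c * n ^ e / L ^ C' ≤ c₂ * n ^ ((58:ℝ)/37) / (K₀ ^ ((42:ℝ)/37) * L ^ C) := by
      rw [hKpow]
      have hnum : c * n ^ e ≤ c₂ * n ^ ((58:ℝ)/37 - 5/121 * (42/37)) := by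
        have : e = (58:ℝ)/37 - 5/121 * (42/37) := by rw [he_def]; norm_num
        rw [← this]
        exact mul_le_mul_of_nonneg_right (min_le_right _ _) (Real.rpow_nonneg hn0.le _)
      have hden : n ^ ((5:ℝ)/121 * (42/37)) * L ^ C ≤ n ^ ((5:ℝ)/121 * (42/37)) * L ^ C' :=
        mul_le_mul_of_nonneg_left hLC'.2 (Real.rpow_nonneg hn0.le _)
      have hnn : (0:ℝ) ≤ c₂ * n ^ ((58:ℝ)/37) :=
        mul_nonneg hc₂.le (Real.rpow_nonneg hn0.le _)
      have hnn2 : (0:ℝ) ≤ c₂ * n ^ ((58:ℝ)/37 - 5/121 * (42/37)) :=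
        mul_nonneg hc₂.le (Real.rpow_nonneg hn0.le _)
      have hdpos : (0:ℝ) < n ^ ((5:ℝ)/121 * (42/37)) * L ^ C :=
        mul_pos (Real.rpow_pos_of_pos hn0 _) hLC0
      have hfact : c₂ * n ^ ((58:ℝ)/37 - 5/121 * (42/37)) / L ^ C' =
          c₂ * n ^ ((58:ℝ)/37) / (n ^ ((5:ℝ)/121 * (42/37)) * L ^ C') := by
        rw [Real.rpow_sub hn0, ← mul_div_assoc, div_div]
      calc c * n ^ e / L ^ C'
          ≤ c₂ * n ^ ((58:ℝ)/37 - 5/121 * (42/37)) / L ^ C' :=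
            div_le_div₀ hnn2 hnum hLC'0 le_rfl
        _ = c₂ * n ^ ((58:ℝ)/37) / (n ^ ((5:ℝ)/121 * (42/37)) * L ^ C') := hfact
        _ ≤ c₂ * n ^ ((58:ℝ)/37) / (n ^ ((5:ℝ)/121 * (42/37)) * L ^ C) :=
            div_le_div₀ hnn le_rfl hdpos hden
    exact le_trans hbound (le_trans key hPAA)
end
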